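/- Let σ ⊂ ℝⁿ be a strictly convex rational polyhedral cone and let Δ = conv({0} ∪ P) for a polytope P ⊂ ℝⁿ₊ with dim Δ = n. If γ is a face of Δ with 0 ∈ γ whose dual cone σ(γ) has dimension k, then the linear span L_γ of γ has dimension n − k, and L_γ = σ(γ)^⊥ := {v : ⟨u,v⟩ = 0 for all u ∈ σ(γ)}. -/

import Mathlib

open scoped BigOperators

/-- The standard pairing `⟨u,v⟩ = Σᵢ uᵢvᵢ` on `ℝⁿ`. -/
def dotR {n : ℕ} (u v : Fin n → ℝ) : ℝ := ∑ i, u i * v i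

/-- The face of `K` consisting of the minimizers of `⟨u,·⟩` on `K`. -/
def minimizerFace {n : ℕ} (K : Set (Fin n → ℝ)) (u : Fin n → ℝ) : Set (Fin n → ℝ) :=
  {v ∈ K | ∀ w ∈ K, dotR u v ≤ dotR u w}

/-- `γ` is a face of `K`: the set of minimizers of some linear functional on `K`. -/
def IsFaceOf {n : ℕ} (γ K : Set (Fin n → ℝ)) : Prop :=
  ∃ u : Fin n → ℝ, γ = minimizerFace K u

/-- The cone `σ(γ)` dual to a face `γ` of `K`: the closure of the set of linear
functionals `u` whose minimizer face on `K` is exactly `γ`. -/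
def dualFaceCone {n : ℕ} (K γ : Set (Fin n → ℝ)) : Set (Fin n → ℝ) :=
  closure {u | minimizerFace K u = γ}

/-- The nonnegative orthant `ℝⁿ₊`. -/
def orthant (n : ℕ) : Set (Fin n → ℝ) := {x | ∀ i, 0 ≤ x i}

/-- The cone generated by a finite set `G`: nonnegative combinations of elements of `G`. -/
def conicHull {n : ℕ} (G : Finset (Fin n → ℝ)) : Set (Fin n → ℝ) :=
  {x | ∃ c : {g // g ∈ G} → ℝ, (∀ g, 0 ≤ c g) ∧ x = ∑ g, c g • (g : Fin n → ℝ)}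

/-- `F` is a face of the cone `σ`: the intersection of `σ` with the kernel of a linear
functional that is nonnegative on `σ`. -/
def IsFaceOfCone {n : ℕ} (F σ : Set (Fin n → ℝ)) : Prop :=
  ∃ u : Fin n → ℝ, (∀ x ∈ σ, 0 ≤ dotR u x) ∧ F = {x ∈ σ | dotR u x = 0}

section Aux

variable {n : ℕ}

lemma dotR_comm (u v : Fin n → ℝ) : dotR u v = dotR v u := by
  simp [dotR, mul_comm]

lemma dotR_zero_right (u : Fin n → ℝ) : dotR u 0 = 0 := by simp [dotR]

lemma isLinearMap_dotR (u : Fin n → ℝ) : IsLinearMap ℝ (dotR u) := by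
  constructor
  · intro x y; simp [dotR, mul_add, Finset.sum_add_distrib]
  · intro c x; simp [dotR, Finset.mul_sum, mul_left_comm]

lemma dotR_sum (u : Fin n → ℝ) {ι : Type*} (s : Finset ι) (f : ι → ℝ) (z : ι → Fin n → ℝ) :
    dotR u (∑ y ∈ s, f y • z y) = ∑ y ∈ s, f y * dotR u (z y) := by
  let h : (Fin n → ℝ) →ₗ[ℝ] ℝ := IsLinearMap.mk' _ (isLinearMap_dotR u)
  calc dotR u (∑ y ∈ s, f y • z y) = h (∑ y ∈ s, f y • z y) := rfl
    _ = ∑ y ∈ s, f y * dotR u (z y) := by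
        rw [map_sum]
        refine Finset.sum_congr rfl fun y _ => ?_
        rw [map_smul]; rfl

lemma dotR_add_smul (u w v : Fin n → ℝ) (c : ℝ) :
    dotR (u + c • w) v = dotR u v + c * dotR w v := by
  simp [dotR, add_mul, Finset.sum_add_distrib, Finset.mul_sum, mul_assoc]

end Aux

/-- let `Δ = conv({0} ∪ P)` for a polytope `P ⊂ ℝⁿ₊`, with `dim Δ = n`. If
`γ` is a face of `Δ` with `0 ∈ γ` whose dual cone `σ(γ)` has dimension `k`, then the
linear span `L_γ` of `γ` has dimension `n − k` and `L_γ = σ(γ)^⊥`. -/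
theorem span_of_face_is_orthogonal_complement {n : ℕ}
    (V : Finset (Fin n → ℝ)) (hV : ∀ v ∈ V, ∀ i, 0 ≤ v i)
    (Δ : Set (Fin n → ℝ))
    (hΔ : Δ = convexHull ℝ (insert 0 (convexHull ℝ (V : Set (Fin n → ℝ)))))
    (hdim : Module.finrank ℝ (vectorSpan ℝ Δ) = n)
    (γ : Set (Fin n → ℝ)) (hγ : IsFaceOf γ Δ) (h0γ : (0 : Fin n → ℝ) ∈ γ)
    (k : ℕ) (hk : Module.finrank ℝ (Submodule.span ℝ (dualFaceCone Δ γ)) = k) :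
    Module.finrank ℝ (Submodule.span ℝ γ) = n - k ∧
      (Submodule.span ℝ γ : Set (Fin n → ℝ)) =
        {v | ∀ u ∈ dualFaceCone Δ γ, dotR u v = 0} := by
  classical
  obtain ⟨u₀, hu₀⟩ := hγ
  set S : Set (Fin n → ℝ) := {u | minimizerFace Δ u = γ} with hSdef
  have hu₀S : u₀ ∈ S := hu₀.symm
  -- basic facts about Δ
  have hΔeq : Δ = convexHull ℝ ((insert 0 V : Finset (Fin n → ℝ)) : Set (Fin n → ℝ)) := by
    rw [hΔ, Finset.coe_insert]
    apply Set.Subset.antisymm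
    · apply convexHull_min _ (convex_convexHull ℝ _)
      intro x hx
      rcases hx with rfl | hx
      · exact subset_convexHull ℝ _ (Set.mem_insert _ _)
      · exact convexHull_mono (Set.subset_insert _ _) hx
    · exact convexHull_mono (Set.insert_subset_insert (subset_convexHull ℝ _))
  have h0Δ : (0 : Fin n → ℝ) ∈ Δ := by
    rw [hΔeq]
    exact subset_convexHull ℝ _ (by simp)
  have hVΔ : ∀ v ∈ V, v ∈ Δ := by
    intro v hv
    rw [hΔeq]
    exact subset_convexHull ℝ _ (by simp [hv])
  have hγΔ : γ ⊆ Δ := by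
    rw [hu₀]; exact fun x hx => hx.1
  -- nonnegativity and zero characterization for u ∈ S
  have hnonneg : ∀ u ∈ S, ∀ x ∈ Δ, 0 ≤ dotR u x := by
    intro u hu x hx
    have h0m : (0 : Fin n → ℝ) ∈ minimizerFace Δ u := by rw [hu]; exact h0γ
    have := h0m.2 x hx
    rwa [dotR_zero_right] at this
  have hzero : ∀ u ∈ S, ∀ v ∈ γ, dotR u v = 0 := by
    intro u hu v hv
    have hvm : v ∈ minimizerFace Δ u := by rw [hu]; exact hv
    have h1 := hvm.2 0 h0Δ
    rw [dotR_zero_right] at h1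
    exact le_antisymm h1 (hnonneg u hu v (hγΔ hv))
  have hmemγ : ∀ u ∈ S, ∀ x ∈ Δ, dotR u x = 0 → x ∈ γ := by
    intro u hu x hx hx0
    have : x ∈ minimizerFace Δ u := by
      refine ⟨hx, fun z hz => ?_⟩
      rw [hx0]; exact hnonneg u hu z hz
    rwa [hu] at this
  -- extend vanishing to the closure
  have hzero' : ∀ u ∈ dualFaceCone Δ γ, ∀ v ∈ γ, dotR u v = 0 := by
    intro u hu v hv
    have hcl : IsClosed {u : Fin n → ℝ | dotR u v = 0} := by
      apply isClosed_eq _ continuous_const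
      exact continuous_finset_sum _ fun i _ => (continuous_apply i).mul continuous_const
    exact hcl.closure_subset_iff.mpr (fun z hz => hzero z hz v hv) hu
  -- THE HARD LEMMA: vectors orthogonal to γ lie in the span of S
  have hard : ∀ w : Fin n → ℝ, (∀ v ∈ γ, dotR w v = 0) → w ∈ Submodule.span ℝ S := by
    intro w hw
    have hpos : ∀ v ∈ V, v ∉ γ → 0 < dotR u₀ v := by
      intro v hv hvγ
      rcases lt_or_eq_of_le (hnonneg u₀ hu₀S v (hVΔ v hv)) with h | h
      · exact h
      · exact absurd (hmemγ u₀ hu₀S v (hVΔ v hv) h.symm) hvγ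
    set B : Finset (Fin n → ℝ) := V.filter (fun v => v ∉ γ) with hBdef
    obtain ⟨ε, hε0, hεB⟩ : ∃ ε : ℝ, 0 < ε ∧ ∀ v ∈ B, ε * |dotR w v| < dotR u₀ v := by
      rcases B.eq_empty_or_nonempty with h | h
      · exact ⟨1, one_pos, by simp [h]⟩
      · refine ⟨B.inf' h (fun v => dotR u₀ v / (|dotR w v| + 1)), ?_, ?_⟩
        · rw [Finset.lt_inf'_iff]
          intro v hv
          have hvV : v ∈ V := (Finset.mem_filter.mp hv).1
          have hvγ : v ∉ γ := (Finset.mem_filter.mp hv).2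
          have := hpos v hvV hvγ
          positivity
        · intro v hv
          have hvV : v ∈ V := (Finset.mem_filter.mp hv).1
          have hvγ : v ∉ γ := (Finset.mem_filter.mp hv).2
          have ha : 0 < dotR u₀ v := hpos v hvV hvγ
          have hb : (0:ℝ) ≤ |dotR w v| := abs_nonneg _
          have h1 : B.inf' h (fun v => dotR u₀ v / (|dotR w v| + 1)) ≤
              dotR u₀ v / (|dotR w v| + 1) := Finset.inf'_le _ hv
          have h2 : 0 < B.inf' h (fun v => dotR u₀ v / (|dotR w v| + 1)) := by
            rw [Finset.lt_inf'_iff]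
            intro z hz
            have := hpos z (Finset.mem_filter.mp hz).1 (Finset.mem_filter.mp hz).2
            positivity
          rw [le_div_iff₀ (by positivity)] at h1
          nlinarith
    set u₁ : Fin n → ℝ := u₀ + ε • w with hu₁def
    have hdot₁ : ∀ v, dotR u₁ v = dotR u₀ v + ε * dotR w v := fun v => dotR_add_smul u₀ w v ε
    -- values of u₁ on the generators
    have hgen : ∀ y ∈ (insert 0 V : Finset (Fin n → ℝ)),
        0 ≤ dotR u₁ y ∧ (dotR u₁ y = 0 → dotR u₀ y = 0) := by
      intro y hy
      rcases Finset.mem_insert.mp hy with rfl | hyV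
      · simp [dotR_zero_right]
      · by_cases hyγ : y ∈ γ
        · have h1 : dotR u₀ y = 0 := hzero u₀ hu₀S y hyγ
          have h2 : dotR w y = 0 := hw y hyγ
          rw [hdot₁, h1, h2]
          simp
        · have hyB : y ∈ B := Finset.mem_filter.mpr ⟨hyV, hyγ⟩
          have h1 := hεB y hyB
          have h2 : ε * dotR w y ≥ -(ε * |dotR w y|) := by
            have := neg_abs_le (dotR w y)
            nlinarith
          have h3 : 0 < dotR u₁ y := by rw [hdot₁]; nlinarith
          exact ⟨h3.le, fun h => absurd h h3.ne'⟩
    -- u₁ is nonnegative on Δ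
    have hnn₁ : ∀ x ∈ Δ, 0 ≤ dotR u₁ x := by
      intro x hx
      rw [hΔeq] at hx
      have hconv : Convex ℝ {x : Fin n → ℝ | 0 ≤ dotR u₁ x} :=
        convex_halfSpace_ge (isLinearMap_dotR u₁) 0
      exact convexHull_min (fun y hy => (hgen y hy).1) hconv hx
    -- the minimizer face of u₁ is γ
    have hface : minimizerFace Δ u₁ = γ := by
      ext x
      constructor
      · rintro ⟨hxΔ, hmin⟩
        have hx0 : dotR u₁ x = 0 := by
          have h1 := hmin 0 h0Δ
          rw [dotR_zero_right] at h1
          exact le_antisymm h1 (hnn₁ x hxΔ)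
        have hxh : x ∈ convexHull ℝ ((insert 0 V : Finset (Fin n → ℝ)) : Set (Fin n → ℝ)) := by
          rwa [← hΔeq]
        rw [Finset.convexHull_eq] at hxh
        obtain ⟨f, hf0, hf1, hfx⟩ := hxh
        rw [Finset.centerMass_eq_of_sum_1 _ _ hf1] at hfx
        simp only [id] at hfx
        have hsum : ∑ y ∈ insert 0 V, f y * dotR u₁ y = 0 := by
          have h := dotR_sum u₁ (insert 0 V) f id
          simp only [id] at h
          rw [← h, hfx, hx0]
        have hterm : ∀ y ∈ insert 0 V, f y * dotR u₁ y = 0 :=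
          (Finset.sum_eq_zero_iff_of_nonneg
            (fun y hy => mul_nonneg (hf0 y hy) (hgen y hy).1)).mp hsum
        have hx0' : dotR u₀ x = 0 := by
          have h := dotR_sum u₀ (insert 0 V) f id
          simp only [id] at h
          rw [← hfx, h]
          apply Finset.sum_eq_zero
          intro y hy
          rcases mul_eq_zero.mp (hterm y hy) with h | h
          · rw [h, zero_mul]
          · rw [(hgen y hy).2 h, mul_zero]
        exact hmemγ u₀ hu₀S x hxΔ hx0'
      · intro hxγ
        refine ⟨hγΔ hxγ, fun z hz => ?_⟩
        have hx0 : dotR u₁ x = 0 := by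
          rw [hdot₁, hzero u₀ hu₀S x hxγ, hw x hxγ]; ring
        rw [hx0]
        exact hnn₁ z hz
    have hu₁S : u₁ ∈ S := hface
    have hwval : w = ε⁻¹ • (u₁ - u₀) := by
      rw [hu₁def]
      rw [add_sub_cancel_left, smul_smul, inv_mul_cancel₀ hε0.ne', one_smul]
    rw [hwval]
    exact Submodule.smul_mem _ _ (Submodule.sub_mem _ (Submodule.subset_span hu₁S)
      (Submodule.subset_span hu₀S))
  -- transfer to Euclidean space
  let e : (Fin n → ℝ) ≃ₗ[ℝ] EuclideanSpace ℝ (Fin n) := (WithLp.linearEquiv 2 ℝ (Fin n → ℝ)).symm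
  have hinner : ∀ u v : Fin n → ℝ, (inner ℝ (e u) (e v) : ℝ) = dotR u v := by
    intro u v
    rw [PiLp.inner_apply]
    simp [e, dotR, RCLike.inner_apply, mul_comm]
  set Wγ : Submodule ℝ (EuclideanSpace ℝ (Fin n)) := Submodule.span ℝ (e '' γ) with hWγ
  set Wσ : Submodule ℝ (EuclideanSpace ℝ (Fin n)) :=
    Submodule.span ℝ (e '' dualFaceCone Δ γ) with hWσ
  have hmapγ : Wγ = (Submodule.span ℝ γ).map e.toLinearMap := (Submodule.map_span _ _).symm
  have hmapσ : Wσ = (Submodule.span ℝ (dualFaceCone Δ γ)).map e.toLinearMap :=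
    (Submodule.map_span _ _).symm
  -- orthogonality membership helper
  have hmem_orth : ∀ (s : Set (Fin n → ℝ)) (x : Fin n → ℝ),
      (∀ y ∈ s, dotR y x = 0) → e x ∈ (Submodule.span ℝ (e '' s))ᗮ := by
    intro s x hx
    rw [Submodule.mem_orthogonal]
    intro y hy
    induction hy using Submodule.span_induction with
    | mem z hz =>
        obtain ⟨z', hz', rfl⟩ := hz
        rw [hinner]
        exact hx z' hz'
    | zero => exact inner_zero_left _
    | add a b _ _ ha hb => rw [inner_add_left, ha, hb, add_zero]
    | smul c a _ ha => rw [real_inner_smul_left, ha, mul_zero]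
  -- central claim
  have hcentral : Wσ = Wγᗮ := by
    apply le_antisymm
    · rw [hWσ, Submodule.span_le]
      rintro _ ⟨u, hu, rfl⟩
      exact hmem_orth γ u (fun v hv => by rw [dotR_comm]; exact hzero' u hu v hv)
    · intro x hx
      set w := e.symm x with hwdef
      have hex : e w = x := e.apply_symm_apply x
      have hwγ : ∀ v ∈ γ, dotR w v = 0 := by
        intro v hv
        have hvW : e v ∈ Wγ := Submodule.subset_span ⟨v, hv, rfl⟩
        have h1 := (Submodule.mem_orthogonal Wγ x).mp hx (e v) hvW
        rw [← hex, hinner] at h1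
        rw [dotR_comm]
        exact h1
      have hw1 : w ∈ Submodule.span ℝ S := hard w hwγ
      have hw2 : w ∈ Submodule.span ℝ (dualFaceCone Δ γ) :=
        Submodule.span_mono subset_closure hw1
      rw [← hex, hmapσ]
      exact ⟨w, hw2, rfl⟩
  -- dimension bookkeeping
  have hfinσ : Module.finrank ℝ Wσ = k := by
    rw [hmapσ, LinearEquiv.finrank_map_eq, hk]
  have hfinγ : Module.finrank ℝ Wγ = Module.finrank ℝ (Submodule.span ℝ γ) := by
    rw [hmapγ, LinearEquiv.finrank_map_eq]
  have hsum : Module.finrank ℝ Wγ + Module.finrank ℝ Wγᗮ = n := by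
    rw [Submodule.finrank_add_finrank_orthogonal, finrank_euclideanSpace_fin]
  have hkval : Module.finrank ℝ Wγᗮ = k := by rw [← hcentral, hfinσ]
  constructor
  · rw [← hfinγ]; omega
  · ext v
    constructor
    · intro hv u hu
      have hvW : e v ∈ Wγ := by
        rw [hmapγ]; exact ⟨v, hv, rfl⟩
      have huO : e u ∈ Wγᗮ :=
        hmem_orth γ u (fun z hz => by rw [dotR_comm]; exact hzero' u hu z hz)
      have h1 := (Submodule.mem_orthogonal Wγ (e u)).mp huO (e v) hvW
      rw [hinner, dotR_comm] at h1
      exact h1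
    · intro hv
      have hvO : e v ∈ Wσᗮ := hmem_orth (dualFaceCone Δ γ) v hv
      rw [hcentral, Submodule.orthogonal_orthogonal] at hvO
      rw [hmapγ] at hvO
      obtain ⟨y, hy, hey⟩ := hvO
      have : y = v := e.injective hey
      rwa [← this]
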